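/- Let A : ℝⁿ → ℝᵐ be a linear map, b ∈ ℝᵐ, and define the value function v(τ) = inf { ‖b − A x‖² : ‖x‖₁ ≤ τ } for τ ≥ 0. Let τ ≥ 0 and let x̄ be a global minimizer of x ↦ ‖b − A x‖² over {x : ‖x‖₁ ≤ τ}, with r̄ = b − A x̄. Then for every τ′ ≥ 0, v(τ′) ≥ v(τ) − 2 ‖Aᵀ r̄‖_∞ (τ′ − τ); that is, −2‖Aᵀ r̄‖_∞ is a subgradient of v at τ. -/

import Mathlib

open scoped RealInnerProductSpace

/-- Subgradient of the LASSO value function `v τ = inf { ‖b − Ax‖² : ‖x‖₁ ≤ τ }`: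
if `x̄` minimizes `‖b − Ax‖²` over the ℓ¹ ball of radius `τ ≥ 0` and `r̄ = b − A x̄`,
then for every `τ' ≥ 0`, `v τ' ≥ v τ − 2 ‖Aᵀ r̄‖_∞ (τ' − τ)`. -/
theorem lasso_value_function_subgradient (n m : ℕ)
    (A : EuclideanSpace ℝ (Fin n) →L[ℝ] EuclideanSpace ℝ (Fin m))
    (b : EuclideanSpace ℝ (Fin m))
    (v : ℝ → ℝ)
    (hv : ∀ t, v t = sInf {r : ℝ | ∃ x : EuclideanSpace ℝ (Fin n),
      (∑ j, |x j|) ≤ t ∧ r = ‖b - A x‖ ^ 2})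
    (τ : ℝ) (hτ : 0 ≤ τ)
    (xb : EuclideanSpace ℝ (Fin n)) (hfeas : (∑ j, |xb j|) ≤ τ)
    (hmin : ∀ x : EuclideanSpace ℝ (Fin n),
      (∑ j, |x j|) ≤ τ → ‖b - A xb‖ ^ 2 ≤ ‖b - A x‖ ^ 2)
    (rb : EuclideanSpace ℝ (Fin m)) (hrb : rb = b - A xb) :
    ∀ τ' : ℝ, 0 ≤ τ' →
      v τ' ≥ v τ - 2 * (⨆ j, |(ContinuousLinearMap.adjoint A) rb j|) * (τ' - τ) := by
  intro τ' hτ'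
  set g : EuclideanSpace ℝ (Fin n) := (ContinuousLinearMap.adjoint A) rb with hg
  set lam : ℝ := ⨆ j, |g j| with hlam
  have hinner : ∀ x : EuclideanSpace ℝ (Fin n), ⟪g, x⟫ = ∑ j, g j * x j := by
    intro x
    simp [PiLp.inner_apply]
    exact Finset.sum_congr rfl fun _ _ => mul_comm _ _
  have hadj : ∀ x : EuclideanSpace ℝ (Fin n), ⟪rb, A x⟫ = ⟪g, x⟫ := by
    intro x
    rw [hg, ContinuousLinearMap.adjoint_inner_left]
  have hbdd : BddAbove (Set.range fun j => |g j|) :=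
    Set.Finite.bddAbove (Set.finite_range _)
  have hlam_nonneg : 0 ≤ lam := Real.iSup_nonneg fun j => abs_nonneg _
  have hlam_ge : ∀ j, |g j| ≤ lam := fun j => le_ciSup hbdd j
  -- Key optimality condition: ⟪g, z⟫ ≤ ⟪g, xb⟫ for all feasible z
  have key : ∀ z : EuclideanSpace ℝ (Fin n), (∑ j, |z j|) ≤ τ → ⟪g, z⟫ ≤ ⟪g, xb⟫ := by
    intro z hz
    set w : EuclideanSpace ℝ (Fin m) := A (z - xb) with hw
    have h2 : ∀ t : ℝ, 0 < t → t ≤ 1 → 2 * ⟪rb, w⟫ ≤ t * ‖w‖ ^ 2 := by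
      intro t ht ht1
      have hxt : (∑ j, |(xb + t • (z - xb) : EuclideanSpace ℝ (Fin n)) j|) ≤ τ := by
        have hb : ∀ j, |(xb + t • (z - xb) : EuclideanSpace ℝ (Fin n)) j|
            ≤ (1 - t) * |xb j| + t * |z j| := by
          intro j
          have : (xb + t • (z - xb) : EuclideanSpace ℝ (Fin n)) j
              = (1 - t) * xb j + t * z j := by
            simp [PiLp.add_apply, PiLp.smul_apply, PiLp.sub_apply, smul_eq_mul]
            ring
          rw [this]
          calc |(1 - t) * xb j + t * z j| ≤ |(1 - t) * xb j| + |t * z j| := abs_add_le _ _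
            _ = (1 - t) * |xb j| + t * |z j| := by
                rw [abs_mul, abs_mul, abs_of_nonneg (by linarith), abs_of_nonneg ht.le]
        calc (∑ j, |(xb + t • (z - xb) : EuclideanSpace ℝ (Fin n)) j|)
            ≤ ∑ j, ((1 - t) * |xb j| + t * |z j|) := Finset.sum_le_sum fun j _ => hb j
          _ = (1 - t) * (∑ j, |xb j|) + t * (∑ j, |z j|) := by
              rw [Finset.sum_add_distrib, Finset.mul_sum, Finset.mul_sum]
          _ ≤ (1 - t) * τ + t * τ := by
              have h1 := mul_le_mul_of_nonneg_left hfeas (show (0:ℝ) ≤ 1 - t by linarith)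
              have h2 := mul_le_mul_of_nonneg_left hz ht.le
              linarith
          _ = τ := by ring
      have hm := hmin _ hxt
      have hA : b - A (xb + t • (z - xb)) = rb - t • w := by
        rw [hrb, hw, map_add, map_smul]
        abel
      rw [hA] at hm
      have hexp : ‖rb - t • w‖ ^ 2 = ‖rb‖ ^ 2 - 2 * (t * ⟪rb, w⟫) + t ^ 2 * ‖w‖ ^ 2 := by
        rw [norm_sub_sq_real, real_inner_smul_right, norm_smul]
        simp [abs_of_nonneg ht.le]
        ring
      rw [← hrb] at hm
      rw [hexp] at hm
      have : 2 * (t * ⟪rb, w⟫) ≤ t ^ 2 * ‖w‖ ^ 2 := by linarith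
      nlinarith [this, ht]
    have hw0 : 2 * ⟪rb, w⟫ ≤ 0 := by
      by_contra hpos
      push_neg at hpos
      set c : ℝ := 2 * ⟪rb, w⟫
      set C : ℝ := ‖w‖ ^ 2 with hC
      have hC0 : 0 ≤ C := sq_nonneg _
      set t : ℝ := min 1 (c / (2 * (C + 1))) with htdef
      have ht : 0 < t := lt_min one_pos (div_pos hpos (by positivity))
      have hle := h2 t ht (min_le_left _ _)
      have ht2 : t * (2 * (C + 1)) ≤ c := by
        have := min_le_right 1 (c / (2 * (C + 1)))
        rw [← htdef] at this
        calc t * (2 * (C + 1)) ≤ (c / (2 * (C + 1))) * (2 * (C + 1)) :=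
              mul_le_mul_of_nonneg_right this (by positivity)
          _ = c := div_mul_cancel₀ _ (by positivity)
      nlinarith [hle, ht2, hC0, ht]
    have : ⟪g, z⟫ - ⟪g, xb⟫ = ⟪rb, w⟫ := by
      rw [hw, hadj, inner_sub_right]
    linarith
  -- Step 2: lam * τ ≤ ⟪g, xb⟫
  have step2 : lam * τ ≤ ⟪g, xb⟫ := by
    rcases Nat.eq_zero_or_pos n with hn | hn
    · subst hn
      have h1 : lam = 0 := by
        rw [hlam]
        exact Real.iSup_of_isEmpty _
      have h2 : ⟪g, xb⟫ = 0 := by rw [hinner]; simp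
      rw [h1, h2]; simp
    · haveI : Nonempty (Fin n) := ⟨⟨0, hn⟩⟩
      obtain ⟨j0, hj0⟩ := Finite.exists_max fun j => |g j|
      have hlam_eq : lam = |g j0| := le_antisymm (ciSup_le hj0) (hlam_ge j0)
      set z : EuclideanSpace ℝ (Fin n) := EuclideanSpace.single j0 (Real.sign (g j0) * τ) with hzd
      have hzfeas : (∑ j, |z j|) ≤ τ := by
        have hsum : (∑ j, |z j|) = |Real.sign (g j0) * τ| := by
          rw [hzd]
          rw [Finset.sum_eq_single j0]
          · simp
          · intro c _ hc; simp [EuclideanSpace.single_apply, hc]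
          · intro h; exact absurd (Finset.mem_univ j0) h
        rw [hsum, abs_mul, abs_of_nonneg hτ]
        rcases lt_trichotomy (g j0) 0 with h | h | h
        · rw [Real.sign_of_neg h]; simp
        · simp [h]; positivity
        · rw [Real.sign_of_pos h]; simp
      have hs : z j0 = Real.sign (g j0) * τ := by
        rw [hzd]; simp [EuclideanSpace.single_apply]
      have hgz : ⟪g, z⟫ = |g j0| * τ := by
        rw [hinner, Finset.sum_eq_single j0, hs]
        · rcases lt_trichotomy (g j0) 0 with h | h | h
          · rw [Real.sign_of_neg h, abs_of_neg h]; ring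
          · simp [h]
          · rw [Real.sign_of_pos h, abs_of_pos h]; ring
        · intro c _ hc; simp [hzd, EuclideanSpace.single_apply, hc]
        · intro h; exact absurd (Finset.mem_univ j0) h
      calc lam * τ = |g j0| * τ := by rw [hlam_eq]
        _ = ⟪g, z⟫ := hgz.symm
        _ ≤ ⟪g, xb⟫ := key z hzfeas
  -- Hölder-type bound
  have holder : ∀ (x : EuclideanSpace ℝ (Fin n)) (t : ℝ), (∑ j, |x j|) ≤ t →
      ⟪g, x⟫ ≤ lam * t := by
    intro x t hx
    rw [hinner]
    calc (∑ j, g j * x j) ≤ ∑ j, |g j * x j| :=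
          Finset.sum_le_sum fun j _ => le_abs_self _
      _ = ∑ j, |g j| * |x j| := by simp [abs_mul]
      _ ≤ ∑ j, lam * |x j| :=
          Finset.sum_le_sum fun j _ => mul_le_mul_of_nonneg_right (hlam_ge j) (abs_nonneg _)
      _ = lam * (∑ j, |x j|) := by rw [Finset.mul_sum]
      _ ≤ lam * t := mul_le_mul_of_nonneg_left hx hlam_nonneg
  -- v τ = ‖rb‖²
  have hvτ : v τ = ‖rb‖ ^ 2 := by
    rw [hv τ]
    have hmem : ‖rb‖ ^ 2 ∈ {r : ℝ | ∃ x : EuclideanSpace ℝ (Fin n),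
        (∑ j, |x j|) ≤ τ ∧ r = ‖b - A x‖ ^ 2} := ⟨xb, hfeas, by rw [hrb]⟩
    have hlb : ∀ r ∈ {r : ℝ | ∃ x : EuclideanSpace ℝ (Fin n),
        (∑ j, |x j|) ≤ τ ∧ r = ‖b - A x‖ ^ 2}, ‖rb‖ ^ 2 ≤ r := by
      rintro r ⟨x, hx, rfl⟩
      rw [hrb]
      exact hmin x hx
    exact le_antisymm (csInf_le ⟨‖rb‖ ^ 2, hlb⟩ hmem) (le_csInf ⟨_, hmem⟩ hlb)
  -- bound each element of set for τ'
  rw [hv τ', hvτ]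
  have hne : {r : ℝ | ∃ x : EuclideanSpace ℝ (Fin n),
      (∑ j, |x j|) ≤ τ' ∧ r = ‖b - A x‖ ^ 2}.Nonempty := by
    refine ⟨‖b - A 0‖ ^ 2, 0, ?_, rfl⟩
    simpa using hτ'
  refine le_csInf hne ?_
  rintro r ⟨x, hx, rfl⟩
  have hdec : b - A x = rb - A (x - xb) := by
    rw [hrb, map_sub]; abel
  have hexp : ‖b - A x‖ ^ 2
      = ‖rb‖ ^ 2 - 2 * (⟪g, x⟫ - ⟪g, xb⟫) + ‖A (x - xb)‖ ^ 2 := by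
    rw [hdec, norm_sub_sq_real, hadj, inner_sub_right]
  have h1 : ⟪g, x⟫ ≤ lam * τ' := holder x τ' hx
  have h2 : ‖A (x - xb)‖ ^ 2 ≥ 0 := sq_nonneg _
  rw [hexp]
  have : lam = ⨆ j, |g j| := hlam
  nlinarith [step2, h1, h2]
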